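/- Let c > 0, lambda in R^{m1}, mu in R^{m2} with mu >= 0, and suppose y is a subgradient at x of the convex function x' |-> L_c(x', lambda, mu). Define lambda+ = lambda + c h(x), mu+ = max{0, mu + c g(x)} (componentwise), u_lambda = (lambda - lambda+)/c and u_mu = (mu - mu+)/c. Then (y, u_lambda, u_mu) belongs to the saddle subdifferential dL(x, lambda+, mu+). -/

import Mathlib

open scoped RealInnerProductSpace
open Filter

noncomputable section

/-- `Evec m` is `ℝ^m` with the Euclidean norm. -/
abbrev Evec (m : ℕ) := EuclideanSpace ℝ (Fin m)

/-- View a plain function `Fin m → ℝ` as a Euclidean vector. -/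
def toE {m : ℕ} (v : Fin m → ℝ) : Evec m := WithLp.toLp 2 v

/-- The dual space `ℝ^{m1} × ℝ^{m2}` with the Euclidean (ℓ²) product norm. -/
abbrev DualPair (m1 m2 : ℕ) := WithLp 2 (Evec m1 × Evec m2)

def mkDual {m1 m2 : ℕ} (lam : Evec m1) (mu : Evec m2) : DualPair m1 m2 := WithLp.toLp 2 (lam, mu)

/-- The primal-dual space `X × ℝ^{m1+m2}` with the Euclidean (ℓ²) product norm. -/
abbrev Triple (X : Type*) [NormedAddCommGroup X] (m1 m2 : ℕ) :=
  WithLp 2 (X × DualPair m1 m2)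

def asT {X : Type*} [NormedAddCommGroup X] {m1 m2 : ℕ}
    (q : X × DualPair m1 m2) : Triple X m1 m2 := WithLp.toLp 2 q

variable {X : Type*} [NormedAddCommGroup X] [InnerProductSpace ℝ X] [FiniteDimensional ℝ X]
variable {m1 m2 : ℕ}

/-- The Lagrangian `L(x, λ, μ) = f(x) + ⟨λ, h(x)⟩ + ⟨μ, g(x)⟩`. -/
def Lag (f : X → ℝ) (h : X → Evec m1) (g : X → Evec m2)
    (x : X) (lam : Evec m1) (mu : Evec m2) : ℝ :=
  f x + ⟪lam, h x⟫ + ⟪mu, g x⟫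

/-- `(y, u, v) ∈ ∂L(x, λ, μ)`: the saddle subdifferential of the Lagrangian (for `μ ≥ 0`). -/
def saddleSubdiff (f : X → ℝ) (h : X → Evec m1) (g : X → Evec m2)
    (x : X) (lam : Evec m1) (mu : Evec m2) (y : X) (u : Evec m1) (v : Evec m2) : Prop :=
  (∀ x' : X, Lag f h g x lam mu + ⟪y, x' - x⟫ ≤ Lag f h g x' lam mu) ∧
  (∀ (lam' : Evec m1) (mu' : Evec m2), (∀ i, 0 ≤ mu' i) →
    Lag f h g x lam' mu' ≤ Lag f h g x lam mu - ⟪u, lam' - lam⟫ - ⟪v, mu' - mu⟫)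

/-- The set of saddle points of the Lagrangian: points `(x, (λ, μ))` with `μ ≥ 0`
and `(0,0,0) ∈ ∂L(x, λ, μ)`. -/
def SaddlePoints (f : X → ℝ) (h : X → Evec m1) (g : X → Evec m2) :
    Set (X × DualPair m1 m2) :=
  {s | ∃ (x : X) (lam : Evec m1) (mu : Evec m2), s = (x, mkDual lam mu) ∧
    (∀ i, 0 ≤ mu i) ∧ saddleSubdiff f h g x lam mu 0 0 0}

/-- `X*`: the solution set of the primal problem (P). -/
def PrimalOpt (f : X → ℝ) (h : X → Evec m1) (g : X → Evec m2) : Set X :=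
  {x | h x = 0 ∧ (∀ i, g x i ≤ 0) ∧
    ∀ x' : X, h x' = 0 → (∀ i, g x' i ≤ 0) → f x ≤ f x'}

/-- The dual objective function `d(λ, μ) = inf_x L(x, λ, μ)`, valued in `EReal`. -/
def dualFun (f : X → ℝ) (h : X → Evec m1) (g : X → Evec m2)
    (lam : Evec m1) (mu : Evec m2) : EReal :=
  ⨅ x : X, ((Lag f h g x lam mu : ℝ) : EReal)

/-- `P*`: the solution set of the dual problem (D). -/
def DualOpt (f : X → ℝ) (h : X → Evec m1) (g : X → Evec m2) : Set (DualPair m1 m2) :=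
  {p | ∃ (lam : Evec m1) (mu : Evec m2), p = mkDual lam mu ∧ (∀ i, 0 ≤ mu i) ∧
    ∀ (lam' : Evec m1) (mu' : Evec m2), (∀ i, 0 ≤ mu' i) →
      dualFun f h g lam' mu' ≤ dualFun f h g lam mu}

/-- The augmented Lagrangian with penalty parameter `c`. -/
def AugLag (f : X → ℝ) (h : X → Evec m1) (g : X → Evec m2) (c : ℝ)
    (x : X) (lam : Evec m1) (mu : Evec m2) : ℝ :=
  f x + ⟪lam, h x⟫ + (c / 2) * ‖h x‖ ^ 2 +
    (1 / (2 * c)) * (‖toE (fun i => max 0 (mu i + c * g x i))‖ ^ 2 - ‖mu‖ ^ 2)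

/-- The inexact augmented Lagrangian method of Eckstein and Silva, with relative error
tolerance `σ ∈ [0,1)` and penalty parameters `c k` with `inf_k c k > 0`. -/
structure ALMSeq (f : X → ℝ) (h : X → Evec m1) (g : X → Evec m2)
    (σ : ℝ) (c : ℕ → ℝ) (x y w : ℕ → X)
    (lam : ℕ → Evec m1) (mu : ℕ → Evec m2) : Prop where
  sigma_nonneg : 0 ≤ σ
  sigma_lt_one : σ < 1
  c_pos : ∀ k, 0 < c k
  c_inf : ∃ cmin > 0, ∀ k, cmin ≤ c k
  mu0_nonneg : ∀ i, 0 ≤ mu 0 i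
  /-- `y k` is a subgradient at `x k` of `x ↦ L_{c_k}(x, λ^{k-1}, μ^{k-1})`. -/
  subgrad : ∀ k, 1 ≤ k → ∀ x' : X,
    AugLag f h g (c k) (x k) (lam (k - 1)) (mu (k - 1)) + ⟪y k, x' - x k⟫ ≤
      AugLag f h g (c k) x' (lam (k - 1)) (mu (k - 1))
  /-- The relative error criterion. -/
  err : ∀ k, 1 ≤ k →
    (2 / c k) * |⟪w (k - 1) - x k, y k⟫| + ‖y k‖ ^ 2 ≤
      σ * (‖h (x k)‖ ^ 2 +
        ‖toE (fun i => min (mu (k - 1) i / c k) (-(g (x k) i)))‖ ^ 2)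
  lam_update : ∀ k, 1 ≤ k → lam k = lam (k - 1) + c k • h (x k)
  mu_update : ∀ k, 1 ≤ k → mu k = toE (fun i => max 0 (mu (k - 1) i + c k * g (x k) i))
  w_update : ∀ k, 1 ≤ k → w k = w (k - 1) - c k • y k

lemma toE_apply {m : ℕ} (v : Fin m → ℝ) (i : Fin m) : toE v i = v i := rfl

lemma inner_E {m : ℕ} (a b : Evec m) : ⟪a,b⟫ = ∑ i, a i * b i := by
  simp [PiLp.inner_apply, RCLike.inner_apply, conj_trivial]
  exact Finset.sum_congr rfl (fun _ _ => mul_comm _ _)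

lemma normsq_E {m : ℕ} (a : Evec m) : ‖a‖^2 = ∑ i, (a i)^2 := by
  rw [EuclideanSpace.norm_eq, Real.sq_sqrt (by positivity)]
  simp [sq_abs]

lemma sq_max_bounds (s t : ℝ) : 0 ≤ (max 0 t)^2 - (max 0 s)^2 - 2*(max 0 s)*(t-s) ∧
    (max 0 t)^2 - (max 0 s)^2 - 2*(max 0 s)*(t-s) ≤ (t-s)^2 := by
  rcases le_or_gt s 0 with hs | hs <;> rcases le_or_gt t 0 with ht | ht <;>
  [ rw [max_eq_left hs, max_eq_left ht];
    rw [max_eq_left hs, max_eq_right ht.le];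
    rw [max_eq_right hs.le, max_eq_left ht];
    rw [max_eq_right hs.le, max_eq_right ht.le]] <;>
  constructor <;> nlinarith [sq_nonneg (t-s), sq_nonneg t, sq_nonneg s]

lemma hasDerivAt_sq_max (s : ℝ) : HasDerivAt (fun t => (max 0 t)^2) (2 * max 0 s) s := by
  rw [hasDerivAt_iff_isLittleO]
  have h1 : (fun t : ℝ => (max 0 t)^2 - (max 0 s)^2 - (t-s) • (2*max 0 s)) =O[nhds s]
      (fun t => (t-s)^2) := by
    apply Asymptotics.IsBigO.of_bound 1
    filter_upwards with t
    obtain ⟨h0, h2⟩ := sq_max_bounds s t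
    simp only [smul_eq_mul, Real.norm_eq_abs, one_mul]
    rw [abs_of_nonneg (by linarith : (0:ℝ) ≤ _), abs_of_nonneg (sq_nonneg _)]
    linarith
  refine h1.trans_isLittleO ?_
  rw [Asymptotics.isLittleO_iff]
  intro c hc
  filter_upwards [Metric.ball_mem_nhds s hc] with t ht
  rw [Metric.mem_ball, Real.dist_eq] at ht
  simp only [Real.norm_eq_abs]
  rw [abs_of_nonneg (sq_nonneg _), ← sq_abs (t-s), sq]
  exact mul_le_mul_of_nonneg_right ht.le (abs_nonneg _)


set_option maxHeartbeats 1000000 in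
theorem alm_subgradient_step_in_saddle_subdifferential
    {f : X → ℝ} {h : X → Evec m1} {g : X → Evec m2}
    (hf : ConvexOn ℝ Set.univ f)
    (hh : ∃ A : X →ᵃ[ℝ] Evec m1, ∀ z, h z = A z)
    (hg1 : ∀ i, ConvexOn ℝ Set.univ (fun z => g z i))
    (hg2 : ∀ i, ContDiff ℝ 1 (fun z => g z i))
    (c : ℝ) (hc : 0 < c) (lam : Evec m1) (mu : Evec m2) (hmu : ∀ i, 0 ≤ mu i)
    (x yy : X)
    (hy : ∀ x' : X, AugLag f h g c x lam mu + ⟪yy, x' - x⟫ ≤ AugLag f h g c x' lam mu) :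
    saddleSubdiff f h g x
      (lam + c • h x) (toE (fun i => max 0 (mu i + c * g x i)))
      yy
      (c⁻¹ • (lam - (lam + c • h x)))
      (c⁻¹ • (mu - toE (fun i => max 0 (mu i + c * g x i)))) := by
  obtain ⟨A, hA⟩ := hh
  set lamp : Evec m1 := lam + c • h x with hlamp
  set mup : Evec m2 := toE (fun i => max 0 (mu i + c * g x i)) with hmup
  have hmupi : ∀ i, mup i = max 0 (mu i + c * g x i) := fun i => rfl
  have hmup_nonneg : ∀ i, 0 ≤ mup i := fun i => le_max_left _ _
  constructor
  · -- primal part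
    intro x'
    set d := x' - x with hd
    have hx1 : x + (1:ℝ) • d = x' := by rw [one_smul, hd, add_sub_cancel]
    have hx0 : x + (0:ℝ) • d = x := by rw [zero_smul, add_zero]
    have hxt : ∀ t : ℝ, x + t • d = (1-t) • x + t • x' := by
      intro t
      rw [hd, smul_sub, sub_smul, one_smul]
      abel
    have hAd : ∀ t : ℝ, h (x + t • d) = h x + t • A.linear d := by
      intro t
      rw [hA, hA]
      have e : x + t • d = t • d +ᵥ x := add_comm x (t • d)
      rw [e, AffineMap.map_vadd, A.linear.map_smul, vadd_eq_add]
      exact add_comm _ _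
    set Ad := A.linear d with hAdd
    set F : ℝ → ℝ := fun t => f (x + t • d) with hF
    set Φ : ℝ → ℝ := fun t => ⟪lam, h (x + t • d)⟫ + c / 2 * ‖h (x + t • d)‖ ^ 2 +
        1 / (2 * c) * (‖toE (fun i => max 0 (mu i + c * g (x + t • d) i))‖ ^ 2 - ‖mu‖ ^ 2)
      with hPhi
    set Ψ : ℝ → ℝ := fun t => ⟪lamp, h (x + t • d)⟫ + ⟪mup, g (x + t • d)⟫ with hPsi
    set R : ℝ → ℝ := fun t => Φ t - Ψ t with hRdef
    -- subgradient inequality along the segment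
    have hkey : ∀ t : ℝ, F 0 + Φ 0 + t * ⟪yy, d⟫ ≤ F t + Φ t := by
      intro t
      have h1 := hy (x + t • d)
      simp only [AugLag] at h1
      have e1 : x + t • d - x = t • d := by abel
      rw [e1, real_inner_smul_right] at h1
      simp only [hF, hPhi, hx0]
      linarith
    -- convexity of f along the segment
    have hFc : ∀ t ∈ Set.Ioo (0:ℝ) 1, F t ≤ (1-t) * F 0 + t * F 1 := by
      intro t ht
      simp only [hF, hx0, hx1, hxt t]
      exact hf.2 (Set.mem_univ x) (Set.mem_univ x') (by linarith [ht.2]) ht.1.le (by ring)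
    -- "convexity" of Ψ along the segment
    have hlin : ∀ (w : Evec m1) (t : ℝ), ⟪w, h (x + t • d)⟫ = ⟪w, h x⟫ + t * ⟪w, Ad⟫ := by
      intro w t
      rw [hAd, inner_add_right, real_inner_smul_right]
    have hlin1 : ∀ w : Evec m1, ⟪w, h x'⟫ = ⟪w, h x⟫ + ⟪w, Ad⟫ := by
      intro w
      have := hlin w 1
      rwa [hx1, one_mul] at this
    have hPsic : ∀ t ∈ Set.Ioo (0:ℝ) 1, Ψ t ≤ (1-t) * Ψ 0 + t * Ψ 1 := by
      intro t ht
      have hgpart : ⟪mup, g (x + t • d)⟫ ≤ (1-t) * ⟪mup, g x⟫ + t * ⟪mup, g x'⟫ := by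
        simp only [inner_E]
        rw [Finset.mul_sum, Finset.mul_sum, ← Finset.sum_add_distrib]
        apply Finset.sum_le_sum
        intro i _
        have hcx := (hg1 i).2 (Set.mem_univ x) (Set.mem_univ x')
          (by linarith [ht.2] : (0:ℝ) ≤ 1 - t) ht.1.le (by ring)
        rw [hxt t]
        calc mup i * g ((1-t) • x + t • x') i
            ≤ mup i * ((1-t) * g x i + t * g x' i) :=
              mul_le_mul_of_nonneg_left hcx (hmup_nonneg i)
          _ = (1-t) * (mup i * g x i) + t * (mup i * g x' i) := by ring
      simp only [hPsi, hx0, hx1]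
      rw [hlin lamp t, hlin1 lamp]
      linarith
    -- x + 0 • d minimizes R
    have hRmin : ∀ t : ℝ, R 0 ≤ R t := by
      intro t
      set z := x + t • d with hz
      have hlampart : ⟪lam, h x⟫ + c / 2 * ‖h x‖ ^ 2 - ⟪lamp, h x⟫ ≤
          ⟪lam, h z⟫ + c / 2 * ‖h z‖ ^ 2 - ⟪lamp, h z⟫ := by
        have e1 : ∀ w : Evec m1, ⟪lam, w⟫ - ⟪lamp, w⟫ = -(c * ⟪h x, w⟫) := by
          intro w
          rw [hlamp, inner_add_left, real_inner_smul_left]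
          ring
        have e2 := e1 (h x)
        have e3 := e1 (h z)
        have e4 : ‖h z - h x‖^2 = ‖h z‖^2 - 2 * ⟪h z, h x⟫ + ‖h x‖^2 :=
          norm_sub_sq_real (h z) (h x)
        have e5 : ⟪h x, h x⟫ = ‖h x‖^2 := real_inner_self_eq_norm_sq (h x)
        have e6 : ⟪h x, h z⟫ = ⟪h z, h x⟫ := real_inner_comm _ _
        nlinarith [sq_nonneg ‖h z - h x‖, hc.le, mul_nonneg hc.le (sq_nonneg ‖h z - h x‖)]
      have hgp : ∀ i : Fin m2,
          1 / (2*c) * (max 0 (mu i + c * g x i))^2 - mup i * g x i ≤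
          1 / (2*c) * (max 0 (mu i + c * g z i))^2 - mup i * g z i := by
        intro i
        have hb := (sq_max_bounds (mu i + c * g x i) (mu i + c * g z i)).1
        have hpos : (0:ℝ) < 1 / (2*c) := by positivity
        have := mul_le_mul_of_nonneg_left hb hpos.le
        rw [mul_zero] at this
        have hmupe : mup i = max 0 (mu i + c * g x i) := hmupi i
        have key : 1 / (2*c) * ((max 0 (mu i + c * g z i))^2 - (max 0 (mu i + c * g x i))^2
            - 2 * (max 0 (mu i + c * g x i)) * ((mu i + c * g z i) - (mu i + c * g x i))) =
            (1 / (2*c) * (max 0 (mu i + c * g z i))^2 - mup i * g z i) -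
            (1 / (2*c) * (max 0 (mu i + c * g x i))^2 - mup i * g x i) := by
          rw [hmupe]
          field_simp
          ring
        linarith [key ▸ this]
      have hgsum : 1 / (2*c) * (‖toE (fun i => max 0 (mu i + c * g x i))‖^2 - ‖mu‖^2)
            - ⟪mup, g x⟫ ≤
          1 / (2*c) * (‖toE (fun i => max 0 (mu i + c * g z i))‖^2 - ‖mu‖^2)
            - ⟪mup, g z⟫ := by
        simp only [normsq_E, toE_apply, inner_E, mul_sub, Finset.mul_sum]
        have hs := Finset.sum_le_sum (fun i (_ : i ∈ Finset.univ) => hgp i)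
        rw [Finset.sum_sub_distrib, Finset.sum_sub_distrib] at hs
        simp only [Finset.mul_sum] at hs ⊢
        linarith
      simp only [hRdef, hPhi, hPsi, hx0, ← hz]
      linarith
    -- R is differentiable at 0
    have hcurve : HasDerivAt (fun t : ℝ => x + t • d) d 0 := by
      simpa using ((hasDerivAt_id (0:ℝ)).smul_const d).const_add x
    have hgi : ∀ i, DifferentiableAt ℝ (fun t : ℝ => g (x + t • d) i) 0 := by
      intro i
      have hfd : DifferentiableAt ℝ (fun z => g z i) (x + (0:ℝ) • d) :=
        ((hg2 i).differentiable one_ne_zero).differentiableAt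
      exact hfd.comp 0 hcurve.differentiableAt
    have hRdiff : DifferentiableAt ℝ R 0 := by
      have ePhi : Φ = fun t => (⟪lam, h x⟫ + t * ⟪lam, Ad⟫) +
          c / 2 * (‖h x‖^2 + 2 * (t * ⟪h x, Ad⟫) + t^2 * ‖Ad‖^2) +
          1 / (2 * c) * ((∑ i, (max 0 (mu i + c * g (x + t • d) i))^2) - ‖mu‖ ^ 2) := by
        funext t
        simp only [hPhi]
        rw [hlin lam t, hAd t, norm_add_sq_real, real_inner_smul_right, norm_smul,
          mul_pow, Real.norm_eq_abs, sq_abs]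
        simp only [normsq_E, toE_apply]
      have ePsi : Ψ = fun t => (⟪lamp, h x⟫ + t * ⟪lamp, Ad⟫) +
          ∑ i, mup i * g (x + t • d) i := by
        funext t
        simp only [hPsi]
        rw [hlin lamp t, inner_E mup]
      rw [hRdef, ePhi, ePsi]
      apply DifferentiableAt.sub
      · apply DifferentiableAt.add
        apply DifferentiableAt.add
        · exact (differentiableAt_const _).add ((differentiableAt_id).mul_const _)
        · apply (differentiableAt_const _).mul
          apply DifferentiableAt.add
          apply DifferentiableAt.add
          · exact differentiableAt_const _
          · exact (differentiableAt_const _).mul ((differentiableAt_id).mul_const _)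
          · exact ((differentiableAt_id).pow 2).mul_const _
        · apply (differentiableAt_const _).mul
          apply DifferentiableAt.sub _ (differentiableAt_const _)
          apply DifferentiableAt.fun_sum
          intro i _
          have houter : DifferentiableAt ℝ (fun s : ℝ => (max 0 s)^2)
              (mu i + c * g (x + (0:ℝ) • d) i) :=
            (hasDerivAt_sq_max _).differentiableAt
          have hinner : DifferentiableAt ℝ (fun t : ℝ => mu i + c * g (x + t • d) i) 0 :=
            (differentiableAt_const _).add ((differentiableAt_const _).mul (hgi i))
          exact houter.comp 0 hinner
      · apply DifferentiableAt.add
        · exact (differentiableAt_const _).add ((differentiableAt_id).mul_const _)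
        · exact DifferentiableAt.fun_sum fun i _ => (differentiableAt_const _).mul (hgi i)
    have hmin : IsLocalMin R 0 := Filter.Eventually.of_forall hRmin
    have hzero : deriv R 0 = 0 := hmin.deriv_eq_zero
    have hslope : Tendsto (slope R 0) (nhdsWithin (0:ℝ) (Set.Ioi 0)) (nhds 0) := by
      have h1 := hasDerivAt_iff_tendsto_slope.1 hRdiff.hasDerivAt
      rw [hzero] at h1
      exact h1.mono_left (nhdsWithin_mono 0 (fun y hy => ne_of_gt hy))
    have hfin : ∀ t ∈ Set.Ioo (0:ℝ) 1,
        ⟪yy, d⟫ - (Ψ 1 - Ψ 0) - slope R 0 t ≤ F 1 - F 0 := by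
      intro t ht
      have h1 := hkey t
      have h2 := hFc t ht
      have h3 := hPsic t ht
      have h4 : Φ t = Ψ t + R t := by simp only [hRdef]; ring
      have h5 : Φ 0 = Ψ 0 + R 0 := by simp only [hRdef]; ring
      rw [slope_def_field, sub_zero, sub_le_iff_le_add, ← sub_le_iff_le_add',
        le_div_iff₀ ht.1]
      nlinarith [ht.1, ht.2]
    have hlim : Tendsto (fun t => ⟪yy, d⟫ - (Ψ 1 - Ψ 0) - slope R 0 t)
        (nhdsWithin (0:ℝ) (Set.Ioi 0)) (nhds (⟪yy, d⟫ - (Ψ 1 - Ψ 0) - 0)) :=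
      tendsto_const_nhds.sub hslope
    have hfinal : ⟪yy, d⟫ - (Ψ 1 - Ψ 0) - 0 ≤ F 1 - F 0 := by
      refine le_of_tendsto hlim ?_
      filter_upwards [Ioo_mem_nhdsGT_of_mem (Set.mem_Ico.2 ⟨le_refl (0:ℝ), one_pos⟩)] with t ht
      exact hfin t ht
    simp only [hF, hPsi, hx0, hx1, sub_zero] at hfinal
    simp only [Lag]
    linarith
  · -- dual part
    intro lam' mu' hmu'
    have hlam_term : ⟪lam', h x⟫ - ⟪lamp, h x⟫ + ⟪c⁻¹ • (lam - lamp), lam' - lamp⟫ = 0 := by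
      have : lam - lamp = -(c • h x) := by rw [hlamp]; abel
      rw [this, smul_neg, smul_smul, inv_mul_cancel₀ hc.ne', one_smul, inner_neg_left,
        inner_sub_right, real_inner_comm (h x) lam', real_inner_comm (h x) lamp]
      ring
    have hmu_term : ⟪mu', g x⟫ - ⟪mup, g x⟫ + ⟪c⁻¹ • (mu - mup), mu' - mup⟫ ≤ 0 := by
      simp only [inner_E, PiLp.smul_apply, PiLp.sub_apply, smul_eq_mul]
      rw [← Finset.sum_sub_distrib, ← Finset.sum_add_distrib]
      apply Finset.sum_nonpos
      intro i _
      rcases le_or_gt 0 (mu i + c * g x i) with hs | hs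
      · rw [hmupi, max_eq_right hs]
        have key : mu' i * g x i - (mu i + c * g x i) * g x i +
            c⁻¹ * (mu i - (mu i + c * g x i)) * (mu' i - (mu i + c * g x i)) =
            c⁻¹ * 0 * (mu' i - (mu i + c * g x i)) +
              (mu' i - (mu i + c * g x i)) * (g x i - c⁻¹ * (c * g x i)) := by ring
        rw [key, inv_mul_cancel_left₀ hc.ne']
        simp
      · rw [hmupi, max_eq_left hs.le]
        have h1 : (0:ℝ) < c⁻¹ := by positivity
        have hP : mu' i * (mu i + c * g x i) ≤ 0 :=
          mul_nonpos_iff.2 (Or.inl ⟨hmu' i, hs.le⟩)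
        have key : mu' i * g x i - 0 * g x i + c⁻¹ * (mu i - 0) * (mu' i - 0)
            = c⁻¹ * (mu' i * (mu i + c * g x i)) := by
          field_simp
          ring
        rw [key]
        exact mul_nonpos_iff.2 (Or.inl ⟨h1.le, hP⟩)
    simp only [Lag]
    linarith [hlam_term, hmu_term]
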